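/- Let (X, 𝒜, μ) be a finite measure space, E a real normed vector space, and j : E → L^∞(μ) a continuous linear map (hence j is also continuous from E into L²(μ)). Let Φ : ℝ → ℝ be twice continuously differentiable with Φ'' bounded on ℝ. Then the functional ℰ : E → ℝ, ℰ(v) := ∫_X Φ(j(v)) dμ, is twice Fréchet differentiable on E, with first derivative Dℰ(v)h = ∫_X Φ'(j(v))·j(h) dμ and second derivative D²ℰ(v)[h,k] = ∫_X Φ''(j(v))·j(h)·j(k) dμ for all v, h, k ∈ E. -/

import Mathlib

open MeasureTheory

section Phi
variable {Φ : ℝ → ℝ} {C : ℝ}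

lemma aux_diff1 (hΦ : ContDiff ℝ 2 Φ) : Differentiable ℝ Φ := hΦ.differentiable (by norm_num)

lemma aux_diff2 (hΦ : ContDiff ℝ 2 Φ) : Differentiable ℝ (deriv Φ) := by
  have h := (contDiff_succ_iff_deriv (n := 1)).1 (by exact_mod_cast hΦ)
  exact h.2.2.differentiable (by norm_num)

lemma aux_cont1 (hΦ : ContDiff ℝ 2 Φ) : Continuous (deriv Φ) :=
  hΦ.continuous_deriv one_le_two

lemma aux_cont2 (hΦ : ContDiff ℝ 2 Φ) : Continuous (deriv (deriv Φ)) := by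
  have h := (contDiff_succ_iff_deriv (n := 1)).1 (by exact_mod_cast hΦ)
  exact h.2.2.continuous_deriv le_rfl

lemma aux_lip (hΦ : ContDiff ℝ 2 Φ) (hΦ'' : ∀ x : ℝ, |deriv (deriv Φ) x| ≤ C)
    (a b : ℝ) : |deriv Φ b - deriv Φ a| ≤ C * |b - a| := by
  have := Convex.norm_image_sub_le_of_norm_deriv_le (s := (Set.univ : Set ℝ))
    (f := deriv Φ) (C := C) (fun x _ => aux_diff2 hΦ x)
    (fun x _ => by simpa [Real.norm_eq_abs] using hΦ'' x) convex_univ (Set.mem_univ a)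
    (Set.mem_univ b)
  simpa [Real.norm_eq_abs] using this

lemma aux_C0 (hΦ'' : ∀ x : ℝ, |deriv (deriv Φ) x| ≤ C) : 0 ≤ C :=
  (abs_nonneg _).trans (hΦ'' 0)

lemma aux_phi'_bound (hΦ : ContDiff ℝ 2 Φ) (hΦ'' : ∀ x : ℝ, |deriv (deriv Φ) x| ≤ C)
    (y : ℝ) : |deriv Φ y| ≤ |deriv Φ 0| + C * |y| := by
  have := aux_lip hΦ hΦ'' 0 y
  simp only [sub_zero] at this
  have h2 : |deriv Φ y| - |deriv Φ 0| ≤ |deriv Φ y - deriv Φ 0| := abs_sub_abs_le_abs_sub _ _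
  linarith

lemma aux_taylor1 (hΦ : ContDiff ℝ 2 Φ) (hΦ'' : ∀ x : ℝ, |deriv (deriv Φ) x| ≤ C)
    (a b : ℝ) : |Φ b - Φ a - deriv Φ a * (b - a)| ≤ C * (b - a) ^ 2 := by
  have hgd : ∀ t : ℝ, HasDerivAt (fun t => Φ t - deriv Φ a * t) (deriv Φ t - deriv Φ a) t := by
    intro t
    have h1 : HasDerivAt (fun t : ℝ => deriv Φ a * t) (deriv Φ a) t := by
      simpa using (hasDerivAt_id t).const_mul (deriv Φ a)
    exact ((aux_diff1 hΦ t).hasDerivAt).sub h1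
  have key := Convex.norm_image_sub_le_of_norm_hasDerivWithin_le (C := C * |b - a|)
    (f := fun t => Φ t - deriv Φ a * t) (f' := fun t => deriv Φ t - deriv Φ a)
    (s := Set.uIcc a b)
    (fun t _ => (hgd t).hasDerivWithinAt)
    (fun t ht => by
      rw [Real.norm_eq_abs]
      exact (aux_lip hΦ hΦ'' a t).trans
        (mul_le_mul_of_nonneg_left (Set.abs_sub_left_of_mem_uIcc ht) (aux_C0 hΦ'')))
    (convex_uIcc a b) Set.left_mem_uIcc Set.right_mem_uIcc
  have e1 : (Φ b - deriv Φ a * b) - (Φ a - deriv Φ a * a) = Φ b - Φ a - deriv Φ a * (b - a) := by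
    ring
  rw [Real.norm_eq_abs, Real.norm_eq_abs, e1] at key
  calc |Φ b - Φ a - deriv Φ a * (b - a)| ≤ C * |b - a| * |b - a| := key
    _ = C * (b - a) ^ 2 := by rw [mul_assoc, abs_mul_abs_self, sq]

lemma aux_phi_bound (hΦ : ContDiff ℝ 2 Φ) (hΦ'' : ∀ x : ℝ, |deriv (deriv Φ) x| ≤ C)
    (y : ℝ) : |Φ y| ≤ |Φ 0| + |deriv Φ 0| * |y| + C * y ^ 2 := by
  have := aux_taylor1 hΦ hΦ'' 0 y
  simp only [sub_zero] at this
  have h2 : |Φ y| - |Φ 0 + deriv Φ 0 * y| ≤ |Φ y - (Φ 0 + deriv Φ 0 * y)| :=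
    (abs_sub_abs_le_abs_sub _ _)
  have h3 : |Φ 0 + deriv Φ 0 * y| ≤ |Φ 0| + |deriv Φ 0| * |y| :=
    (abs_add_le _ _).trans (by rw [abs_mul])
  have h4 : Φ y - (Φ 0 + deriv Φ 0 * y) = Φ y - Φ 0 - deriv Φ 0 * y := by ring
  rw [h4] at h2
  linarith

lemma aux_taylor2 (hΦ : ContDiff ℝ 2 Φ) {ε : ℝ} (hε : 0 < ε) (R : ℝ) :
    ∃ δ > 0, ∀ a b : ℝ, |a| ≤ R → |b| ≤ R → |b - a| < δ →
      |deriv Φ b - deriv Φ a - deriv (deriv Φ) a * (b - a)| ≤ ε * |b - a| := by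
  have hu : UniformContinuousOn (deriv (deriv Φ)) (Set.Icc (-R) R) :=
    isCompact_Icc.uniformContinuousOn_of_continuous (aux_cont2 hΦ).continuousOn
  rw [Metric.uniformContinuousOn_iff] at hu
  obtain ⟨δ, hδ, hδ'⟩ := hu ε hε
  refine ⟨δ, hδ, fun a b ha hb hab => ?_⟩
  have haI : a ∈ Set.Icc (-R) R := Set.mem_Icc.2 (abs_le.1 ha)
  have hbI : b ∈ Set.Icc (-R) R := Set.mem_Icc.2 (abs_le.1 hb)
  have hsub : Set.uIcc a b ⊆ Set.Icc (-R) R := Set.uIcc_subset_Icc haI hbI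
  have hgd : ∀ t : ℝ, HasDerivAt (fun t => deriv Φ t - deriv (deriv Φ) a * t)
      (deriv (deriv Φ) t - deriv (deriv Φ) a) t := by
    intro t
    have h1 : HasDerivAt (fun t : ℝ => deriv (deriv Φ) a * t) (deriv (deriv Φ) a) t := by
      simpa using (hasDerivAt_id t).const_mul (deriv (deriv Φ) a)
    exact ((aux_diff2 hΦ t).hasDerivAt).sub h1
  have key := Convex.norm_image_sub_le_of_norm_hasDerivWithin_le (C := ε)
    (f := fun t => deriv Φ t - deriv (deriv Φ) a * t)
    (f' := fun t => deriv (deriv Φ) t - deriv (deriv Φ) a)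
    (s := Set.uIcc a b)
    (fun t _ => (hgd t).hasDerivWithinAt)
    (fun t ht => by
      rw [Real.norm_eq_abs]
      have hdist : dist t a < δ := by
        rw [Real.dist_eq]
        exact lt_of_le_of_lt (Set.abs_sub_left_of_mem_uIcc ht) hab
      have := hδ' t (hsub ht) a haI hdist
      rw [Real.dist_eq] at this
      exact this.le)
    (convex_uIcc a b) Set.left_mem_uIcc Set.right_mem_uIcc
  have e1 : (deriv Φ b - deriv (deriv Φ) a * b) - (deriv Φ a - deriv (deriv Φ) a * a)
      = deriv Φ b - deriv Φ a - deriv (deriv Φ) a * (b - a) := by ring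
  rw [Real.norm_eq_abs, Real.norm_eq_abs, e1] at key
  exact key

end Phi

section Measure

variable {X : Type*} [MeasurableSpace X] {μ : Measure X} [IsFiniteMeasure μ]

omit [IsFiniteMeasure μ] in
lemma aux_ae_abs_le (f : Lp ℝ ⊤ μ) : ∀ᵐ x ∂μ, |f x| ≤ ‖f‖ := by
  filter_upwards [ae_le_eLpNormEssSup (f := ⇑f) (μ := μ)] with x hx
  have h2 : eLpNormEssSup (⇑f) μ ≠ ⊤ := by
    have := Lp.eLpNorm_ne_top f
    rwa [eLpNorm_exponent_top] at this
  have h3 := ENNReal.toReal_mono h2 hx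
  rw [toReal_enorm, Real.norm_eq_abs] at h3
  rw [Lp.norm_def, eLpNorm_exponent_top]
  exact h3

lemma aux_integrable {g : X → ℝ} (hg : AEStronglyMeasurable g μ) {K : ℝ}
    (hK : ∀ᵐ x ∂μ, |g x| ≤ K) : Integrable g μ :=
  Integrable.mono' (integrable_const K) hg
    (by filter_upwards [hK] with x hx; rwa [Real.norm_eq_abs])

variable {E : Type*} [NormedAddCommGroup E] [NormedSpace ℝ E]
variable {Φ : ℝ → ℝ} {C : ℝ}

lemma aux_int_T0 (j : E →L[ℝ] Lp ℝ ⊤ μ) (hΦ : ContDiff ℝ 2 Φ)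
    (hΦ'' : ∀ x : ℝ, |deriv (deriv Φ) x| ≤ C) (w : E) :
    Integrable (fun x => Φ ((j w) x)) μ := by
  apply aux_integrable ((hΦ.continuous).comp_aestronglyMeasurable (Lp.aestronglyMeasurable (j w)))
    (K := |Φ 0| + |deriv Φ 0| * ‖j w‖ + C * ‖j w‖ ^ 2)
  filter_upwards [aux_ae_abs_le (j w)] with x hx
  refine (aux_phi_bound hΦ hΦ'' _).trans ?_
  have h1 : ((j w) x) ^ 2 ≤ ‖j w‖ ^ 2 := by
    rw [← sq_abs]; exact pow_le_pow_left₀ (abs_nonneg _) hx 2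
  have hC := aux_C0 hΦ''
  have h0 : (0:ℝ) ≤ |deriv Φ 0| := abs_nonneg _
  nlinarith [abs_nonneg ((j w) x), norm_nonneg (j w)]

lemma aux_int_T1 (j : E →L[ℝ] Lp ℝ ⊤ μ) (hΦ : ContDiff ℝ 2 Φ)
    (hΦ'' : ∀ x : ℝ, |deriv (deriv Φ) x| ≤ C) (v h : E) :
    Integrable (fun x => deriv Φ ((j v) x) * (j h) x) μ := by
  apply aux_integrable (((aux_cont1 hΦ).comp_aestronglyMeasurable
    (Lp.aestronglyMeasurable (j v))).mul (Lp.aestronglyMeasurable (j h)))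
    (K := (|deriv Φ 0| + C * ‖j v‖) * ‖j h‖)
  filter_upwards [aux_ae_abs_le (j v), aux_ae_abs_le (j h)] with x hx1 hx2
  simp only [Pi.mul_apply]
  rw [abs_mul]
  have h1 := aux_phi'_bound hΦ hΦ'' ((j v) x)
  have hC := aux_C0 hΦ''
  have h2 : |deriv Φ ((j v) x)| ≤ |deriv Φ 0| + C * ‖j v‖ := h1.trans (by nlinarith)
  exact mul_le_mul h2 hx2 (abs_nonneg _) (by positivity)

lemma aux_int_T2 (j : E →L[ℝ] Lp ℝ ⊤ μ)
    (hΦ : ContDiff ℝ 2 Φ) (hΦ'' : ∀ x : ℝ, |deriv (deriv Φ) x| ≤ C) (v h k : E) :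
    Integrable (fun x => deriv (deriv Φ) ((j v) x) * (j h) x * (j k) x) μ := by
  apply aux_integrable ((((aux_cont2 hΦ).comp_aestronglyMeasurable
    (Lp.aestronglyMeasurable (j v))).mul (Lp.aestronglyMeasurable (j h))).mul
    (Lp.aestronglyMeasurable (j k)))
    (K := C * ‖j h‖ * ‖j k‖)
  filter_upwards [aux_ae_abs_le (j h), aux_ae_abs_le (j k)] with x hx1 hx2
  simp only [Pi.mul_apply]
  rw [abs_mul, abs_mul]
  have hC := aux_C0 hΦ''
  exact mul_le_mul (mul_le_mul (hΦ'' _) hx1 (abs_nonneg _) hC) hx2 (abs_nonneg _)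
    (by positivity)

omit [IsFiniteMeasure μ] in
lemma aux_coe_add (j : E →L[ℝ] Lp ℝ ⊤ μ) (v h : E) :
    ∀ᵐ x ∂μ, (j (v + h)) x = (j v) x + (j h) x := by
  have h1 : (j (v + h) : Lp ℝ ⊤ μ) = j v + j h := map_add j v h
  have h2 : ⇑(j (v + h)) =ᵐ[μ] ⇑(j v) + ⇑(j h) := h1 ▸ Lp.coeFn_add (j v) (j h)
  filter_upwards [h2] with x hx
  simpa using hx

omit [IsFiniteMeasure μ] in
lemma aux_coe_smul (j : E →L[ℝ] Lp ℝ ⊤ μ) (c : ℝ) (h : E) :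
    ∀ᵐ x ∂μ, (j (c • h)) x = c * (j h) x := by
  have h1 : (j (c • h) : Lp ℝ ⊤ μ) = c • j h := map_smul j c h
  have h2 : ⇑(j (c • h)) =ᵐ[μ] c • ⇑(j h) := h1 ▸ Lp.coeFn_smul c (j h)
  filter_upwards [h2] with x hx
  simpa using hx

end Measure

section CLM

variable {X : Type*} [MeasurableSpace X] {μ : Measure X} [IsFiniteMeasure μ]
variable {E : Type*} [NormedAddCommGroup E] [NormedSpace ℝ E]
variable {Φ : ℝ → ℝ} {C : ℝ}

noncomputable def Dlin (j : E →L[ℝ] Lp ℝ ⊤ μ) (hΦ : ContDiff ℝ 2 Φ)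
    (hΦ'' : ∀ x : ℝ, |deriv (deriv Φ) x| ≤ C) (v : E) : E →L[ℝ] ℝ :=
  LinearMap.mkContinuous
    { toFun := fun h => ∫ x, deriv Φ ((j v) x) * (j h) x ∂μ
      map_add' := fun h k => by
        rw [← integral_add (aux_int_T1 j hΦ hΦ'' v h) (aux_int_T1 j hΦ hΦ'' v k)]
        apply integral_congr_ae
        filter_upwards [aux_coe_add j h k] with x hx
        simp only [hx]; ring
      map_smul' := fun c h => by
        simp only [RingHom.id_apply, smul_eq_mul]
        rw [← integral_const_mul]
        apply integral_congr_ae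
        filter_upwards [aux_coe_smul j c h] with x hx
        rw [hx]; ring }
    ((|deriv Φ 0| + C * ‖j v‖) * ‖j‖ * (μ Set.univ).toReal)
    (fun h => by
      simp only [LinearMap.coe_mk, AddHom.coe_mk]
      have hb : ∀ᵐ x ∂μ, ‖deriv Φ ((j v) x) * (j h) x‖
          ≤ (|deriv Φ 0| + C * ‖j v‖) * (‖j‖ * ‖h‖) := by
        filter_upwards [aux_ae_abs_le (j v), aux_ae_abs_le (j h)] with x hx1 hx2
        rw [Real.norm_eq_abs, abs_mul]
        have hC := aux_C0 hΦ''
        have h2 : |deriv Φ ((j v) x)| ≤ |deriv Φ 0| + C * ‖j v‖ :=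
          (aux_phi'_bound hΦ hΦ'' _).trans (by nlinarith)
        exact mul_le_mul h2 (hx2.trans (j.le_opNorm h)) (abs_nonneg _) (by positivity)
      exact (norm_integral_le_of_norm_le_const hb).trans (le_of_eq (by rw [measureReal_def]; ring)))

lemma Dlin_apply (j : E →L[ℝ] Lp ℝ ⊤ μ) (hΦ : ContDiff ℝ 2 Φ)
    (hΦ'' : ∀ x : ℝ, |deriv (deriv Φ) x| ≤ C) (v h : E) :
    Dlin j hΦ hΦ'' v h = ∫ x, deriv Φ ((j v) x) * (j h) x ∂μ := rfl

noncomputable def D2lin (j : E →L[ℝ] Lp ℝ ⊤ μ) (hΦ : ContDiff ℝ 2 Φ)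
    (hΦ'' : ∀ x : ℝ, |deriv (deriv Φ) x| ≤ C) (v : E) : E →L[ℝ] E →L[ℝ] ℝ :=
  LinearMap.mkContinuous₂
    (LinearMap.mk₂ ℝ
      (fun h k => ∫ x, deriv (deriv Φ) ((j v) x) * (j h) x * (j k) x ∂μ)
      (fun h h' k => by
        rw [← integral_add (aux_int_T2 j hΦ hΦ'' v h k) (aux_int_T2 j hΦ hΦ'' v h' k)]
        apply integral_congr_ae
        filter_upwards [aux_coe_add j h h'] with x hx
        simp only [hx]; ring
      )
      (fun c h k => by
        simp only [smul_eq_mul]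
        rw [← integral_const_mul]
        apply integral_congr_ae
        filter_upwards [aux_coe_smul j c h] with x hx
        rw [hx]; ring)
      (fun h k k' => by
        rw [← integral_add (aux_int_T2 j hΦ hΦ'' v h k) (aux_int_T2 j hΦ hΦ'' v h k')]
        apply integral_congr_ae
        filter_upwards [aux_coe_add j k k'] with x hx
        simp only [hx]; ring)
      (fun c h k => by
        simp only [smul_eq_mul]
        rw [← integral_const_mul]
        apply integral_congr_ae
        filter_upwards [aux_coe_smul j c k] with x hx
        rw [hx]; ring))
    (C * ‖j‖ * ‖j‖ * (μ Set.univ).toReal)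
    (fun h k => by
      simp only [LinearMap.mk₂_apply]
      have hC := aux_C0 hΦ''
      have hb : ∀ᵐ x ∂μ, ‖deriv (deriv Φ) ((j v) x) * (j h) x * (j k) x‖
          ≤ C * (‖j‖ * ‖h‖) * (‖j‖ * ‖k‖) := by
        filter_upwards [aux_ae_abs_le (j h), aux_ae_abs_le (j k)] with x hx1 hx2
        rw [Real.norm_eq_abs, abs_mul, abs_mul]
        exact mul_le_mul (mul_le_mul (hΦ'' _) (hx1.trans (j.le_opNorm h)) (abs_nonneg _)
          (by positivity)) (hx2.trans (j.le_opNorm k)) (abs_nonneg _) (by positivity)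
      exact (norm_integral_le_of_norm_le_const hb).trans (le_of_eq (by rw [measureReal_def]; ring)))

lemma D2lin_apply (j : E →L[ℝ] Lp ℝ ⊤ μ) (hΦ : ContDiff ℝ 2 Φ)
    (hΦ'' : ∀ x : ℝ, |deriv (deriv Φ) x| ≤ C) (v h k : E) :
    D2lin j hΦ hΦ'' v h k = ∫ x, deriv (deriv Φ) ((j v) x) * (j h) x * (j k) x ∂μ := rfl

end CLM

/-- Let `(X, μ)` be a finite measure space, `E` a real normed space, and `j : E → L^∞(μ)` a
continuous linear map. Let `Φ : ℝ → ℝ` be `C²` with `Φ''` bounded. Then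
`ℰ(v) := ∫ Φ(j(v)) dμ` is twice Fréchet differentiable on `E`, with
`Dℰ(v)h = ∫ Φ'(j(v))·j(h) dμ` and `D²ℰ(v)[h,k] = ∫ Φ''(j(v))·j(h)·j(k) dμ`. -/
theorem stmt13 {X : Type*} [MeasurableSpace X] (μ : Measure X) [IsFiniteMeasure μ]
    {E : Type*} [NormedAddCommGroup E] [NormedSpace ℝ E]
    (j : E →L[ℝ] Lp ℝ ⊤ μ)
    (Φ : ℝ → ℝ) (hΦ : ContDiff ℝ 2 Φ)
    (C : ℝ) (hΦ'' : ∀ x : ℝ, |deriv (deriv Φ) x| ≤ C) :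
    ∃ (D : E → E →L[ℝ] ℝ) (D2 : E → E →L[ℝ] E →L[ℝ] ℝ),
      (∀ v : E, HasFDerivAt (fun w : E => ∫ x, Φ ((j w) x) ∂μ) (D v) v) ∧
      (∀ v : E, HasFDerivAt D (D2 v) v) ∧
      (∀ v h : E, D v h = ∫ x, deriv Φ ((j v) x) * (j h) x ∂μ) ∧
      (∀ v h k : E, D2 v h k = ∫ x, deriv (deriv Φ) ((j v) x) * (j h) x * (j k) x ∂μ) := by
  have hC := aux_C0 hΦ''
  refine ⟨Dlin j hΦ hΦ'', D2lin j hΦ hΦ'', ?_, ?_, fun v h => rfl, fun v h k => rfl⟩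
  · intro v
    rw [hasFDerivAt_iff_isLittleO_nhds_zero]
    refine Asymptotics.IsBigO.trans_isLittleO ?_
      (Asymptotics.isLittleO_norm_pow_id (by norm_num : (1:ℕ) < 2))
    refine Asymptotics.IsBigO.of_bound (C * ‖j‖ ^ 2 * (μ Set.univ).toReal) ?_
    filter_upwards with h
    rw [Dlin_apply]
    have int12 : Integrable (fun x => Φ ((j (v + h)) x) - Φ ((j v) x)) μ :=
      (aux_int_T0 j hΦ hΦ'' (v + h)).sub (aux_int_T0 j hΦ hΦ'' v)
    rw [← integral_sub (aux_int_T0 j hΦ hΦ'' (v + h)) (aux_int_T0 j hΦ hΦ'' v),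
      ← integral_sub int12 (aux_int_T1 j hΦ hΦ'' v h)]
    have hb : ∀ᵐ x ∂μ, ‖Φ ((j (v + h)) x) - Φ ((j v) x) - deriv Φ ((j v) x) * (j h) x‖
        ≤ C * ‖j‖ ^ 2 * ‖h‖ ^ 2 := by
      filter_upwards [aux_coe_add j v h, aux_ae_abs_le (j h)] with x hx1 hx2
      rw [Real.norm_eq_abs, hx1]
      have ht := aux_taylor1 hΦ hΦ'' ((j v) x) ((j v) x + (j h) x)
      simp only [add_sub_cancel_left] at ht
      refine ht.trans ?_
      have h2 : ((j h) x) ^ 2 ≤ (‖j‖ * ‖h‖) ^ 2 := by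
        rw [← sq_abs]
        exact pow_le_pow_left₀ (abs_nonneg _) (hx2.trans (j.le_opNorm h)) 2
      nlinarith
    have hnn : ‖(fun h : E => ‖h‖ ^ 2) h‖ = ‖h‖ ^ 2 := by
      simp only [Real.norm_eq_abs]; exact abs_of_nonneg (by positivity)
    calc ‖∫ x, (Φ ((j (v + h)) x) - Φ ((j v) x) - deriv Φ ((j v) x) * (j h) x) ∂μ‖
        ≤ C * ‖j‖ ^ 2 * ‖h‖ ^ 2 * (μ Set.univ).toReal := norm_integral_le_of_norm_le_const hb
      _ = C * ‖j‖ ^ 2 * (μ Set.univ).toReal * ‖(fun h : E => ‖h‖ ^ 2) h‖ := by rw [hnn]; ring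
  · intro v
    rw [hasFDerivAt_iff_isLittleO_nhds_zero, Asymptotics.isLittleO_iff]
    intro ε' hε'
    set K := ‖j‖ * ‖j‖ * (μ Set.univ).toReal with hKdef
    have hK0 : 0 ≤ K := by positivity
    set ε₀ := ε' / (K + 1) with hε₀def
    have hεpos : 0 < ε₀ := by positivity
    obtain ⟨δ, hδ, hδ'⟩ := aux_taylor2 hΦ hεpos (‖j v‖ + ‖j‖ + 1)
    have hball : Metric.ball (0 : E) (min 1 (δ / (‖j‖ + 1))) ∈ nhds (0 : E) :=
      Metric.ball_mem_nhds _ (by positivity)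
    filter_upwards [hball] with h hh
    rw [mem_ball_zero_iff] at hh
    have hh1 : ‖h‖ < 1 := lt_of_lt_of_le hh (min_le_left _ _)
    have hh2 : ‖j‖ * ‖h‖ < δ := by
      have h1 : ‖h‖ < δ / (‖j‖ + 1) := lt_of_lt_of_le hh (min_le_right _ _)
      rw [lt_div_iff₀ (by positivity)] at h1
      nlinarith [norm_nonneg h, norm_nonneg j]
    refine ContinuousLinearMap.opNorm_le_bound _ (by positivity) (fun k => ?_)
    have int1 := aux_int_T1 j hΦ hΦ'' (v + h) k
    have int2 := aux_int_T1 j hΦ hΦ'' v k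
    have int3 := aux_int_T2 j hΦ hΦ'' v h k
    have e : (Dlin j hΦ hΦ'' (v + h) - Dlin j hΦ hΦ'' v - D2lin j hΦ hΦ'' v h) k
        = ∫ x, (deriv Φ ((j (v + h)) x) * (j k) x - deriv Φ ((j v) x) * (j k) x
            - deriv (deriv Φ) ((j v) x) * (j h) x * (j k) x) ∂μ := by
      have int12 : Integrable (fun x => deriv Φ ((j (v + h)) x) * (j k) x
          - deriv Φ ((j v) x) * (j k) x) μ := int1.sub int2
      simp only [ContinuousLinearMap.sub_apply, Dlin_apply, D2lin_apply]
      rw [← integral_sub int1 int2, ← integral_sub int12 int3]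
    rw [e]
    have hb : ∀ᵐ x ∂μ, ‖deriv Φ ((j (v + h)) x) * (j k) x - deriv Φ ((j v) x) * (j k) x
        - deriv (deriv Φ) ((j v) x) * (j h) x * (j k) x‖
        ≤ ε₀ * (‖j‖ * ‖h‖) * (‖j‖ * ‖k‖) := by
      filter_upwards [aux_coe_add j v h, aux_ae_abs_le (j v), aux_ae_abs_le (j h),
        aux_ae_abs_le (j k)] with x hx1 hx2 hx3 hx4
      have hjh : |(j h) x| ≤ ‖j‖ * ‖h‖ := hx3.trans (j.le_opNorm h)
      have hjk : |(j k) x| ≤ ‖j‖ * ‖k‖ := hx4.trans (j.le_opNorm k)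
      have hjv : |(j v) x| ≤ ‖j v‖ := hx2
      have ha : |(j v) x| ≤ ‖j v‖ + ‖j‖ + 1 := by
        have := norm_nonneg j; linarith
      have hbb : |(j v) x + (j h) x| ≤ ‖j v‖ + ‖j‖ + 1 := by
        have h5 : |(j v) x + (j h) x| ≤ |(j v) x| + |(j h) x| := abs_add_le _ _
        have h6 : ‖j‖ * ‖h‖ ≤ ‖j‖ := by nlinarith [norm_nonneg j, norm_nonneg h]
        linarith
      have hd : |(j v) x + (j h) x - (j v) x| < δ := by
        simp only [add_sub_cancel_left]
        exact lt_of_le_of_lt hjh hh2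
      have ht := hδ' ((j v) x) ((j v) x + (j h) x) ha hbb hd
      simp only [add_sub_cancel_left] at ht
      have key : |deriv Φ ((j v) x + (j h) x) - deriv Φ ((j v) x)
          - deriv (deriv Φ) ((j v) x) * (j h) x| ≤ ε₀ * |(j h) x| := ht
      rw [hx1, Real.norm_eq_abs]
      have e2 : deriv Φ ((j v) x + (j h) x) * (j k) x - deriv Φ ((j v) x) * (j k) x
          - deriv (deriv Φ) ((j v) x) * (j h) x * (j k) x
          = (deriv Φ ((j v) x + (j h) x) - deriv Φ ((j v) x)
            - deriv (deriv Φ) ((j v) x) * (j h) x) * (j k) x := by ring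
      rw [e2, abs_mul]
      have := mul_le_mul key hjk (abs_nonneg _) (by positivity)
      calc |deriv Φ ((j v) x + (j h) x) - deriv Φ ((j v) x)
            - deriv (deriv Φ) ((j v) x) * (j h) x| * |(j k) x|
          ≤ ε₀ * |(j h) x| * (‖j‖ * ‖k‖) := this
        _ ≤ ε₀ * (‖j‖ * ‖h‖) * (‖j‖ * ‖k‖) := by
            have : ε₀ * |(j h) x| ≤ ε₀ * (‖j‖ * ‖h‖) :=
              mul_le_mul_of_nonneg_left hjh hεpos.le
            exact mul_le_mul_of_nonneg_right this (by positivity)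
    have hfin : ε₀ * K ≤ ε' := by
      have h7 : ε₀ * (K + 1) = ε' := div_mul_cancel₀ _ (by positivity)
      nlinarith
    calc ‖∫ x, (deriv Φ ((j (v + h)) x) * (j k) x - deriv Φ ((j v) x) * (j k) x
          - deriv (deriv Φ) ((j v) x) * (j h) x * (j k) x) ∂μ‖
        ≤ ε₀ * (‖j‖ * ‖h‖) * (‖j‖ * ‖k‖) * (μ Set.univ).toReal :=
          norm_integral_le_of_norm_le_const hb
      _ = (ε₀ * K) * ‖h‖ * ‖k‖ := by rw [hKdef]; ring
      _ ≤ ε' * ‖h‖ * ‖k‖ := by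
          have := mul_le_mul_of_nonneg_right (mul_le_mul_of_nonneg_right hfin (norm_nonneg h))
            (norm_nonneg k)
          linarith
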